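/- Let $\{S_\ell\}_{\ell\ge 1}$ be a positive nondecreasing sequence, $\{b_\ell\}_{\ell\ge 1}$ and $\{k_\ell\}_{\ell\ge 1}$ nonnegative sequences, and $p>1$. Define $a_\ell := \prod_{s=1}^{\ell-1} (1+b_s)^{-1}$. If $S_{\ell+1}-S_\ell \le b_\ell S_\ell + k_\ell S_\ell^p$ for all $\ell\ge 1$, and $S_1^{1-p} + (1-p)\sum_{s=1}^{\ell-1} k_s a_{s+1}^{1-p} > 0$ for all $\ell\ge 2$, then for all $\ell\ge 2$, $S_\ell \le a_\ell^{-1} \big( S_1^{1-p} + (1-p)\sum_{s=1}^{\ell-1} k_s a_{s+1}^{1-p} \big)^{1/(1-p)}$. -/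

import Mathlib

open Real

/-- Tangent line inequality for the convex function `x ↦ x ^ c` with `c < 0`. -/
lemma rpow_tangent_of_neg {c x y : ℝ} (hc : c < 0) (hx : 0 < x) (hy : 0 < y) :
    x ^ c + c * x ^ (c - 1) * (y - x) ≤ y ^ c := by
  have h1c : 0 < 1 - c := by linarith
  have hw₁ : (0:ℝ) ≤ 1 / (1 - c) := by positivity
  have hw₂ : (0:ℝ) ≤ -c / (1 - c) := by
    apply div_nonneg <;> linarith
  have hsum : 1 / (1 - c) + -c / (1 - c) = 1 := by field_simp; ring
  have hp₁ : (0:ℝ) ≤ y ^ c := (rpow_pos_of_pos hy c).le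
  have hp₂ : (0:ℝ) ≤ x ^ (c - 1) * y :=
    mul_nonneg (rpow_pos_of_pos hx _).le hy.le
  have key := Real.geom_mean_le_arith_mean2_weighted hw₁ hw₂ hp₁ hp₂ hsum
  have hL : (y ^ c) ^ (1 / (1 - c)) * (x ^ (c - 1) * y) ^ (-c / (1 - c)) = x ^ c := by
    rw [← Real.rpow_mul hy.le, Real.mul_rpow (rpow_pos_of_pos hx _).le hy.le,
      ← Real.rpow_mul hx.le]
    have e1 : c * (1 / (1 - c)) + -c / (1 - c) = 0 := by field_simp; ring
    have e2 : (c - 1) * (-c / (1 - c)) = c := by field_simp; ring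
    rw [e2, mul_comm (x ^ c), ← mul_assoc, ← Real.rpow_add hy, e1, Real.rpow_zero, one_mul]
  rw [hL] at key
  -- key : x ^ c ≤ 1/(1-c) * y^c + (-c/(1-c)) * (x^(c-1)*y)
  have hxc : x ^ (c - 1) * x = x ^ c := by
    rw [← Real.rpow_add_one hx.ne' (c-1)]
    norm_num
  have h2 : (1 - c) * (x ^ c) ≤ y ^ c + -c * (x ^ (c - 1) * y) := by
    have := mul_le_mul_of_nonneg_left key h1c.le
    calc (1 - c) * x ^ c ≤ (1 - c) * (1 / (1 - c) * y ^ c + -c / (1 - c) * (x ^ (c - 1) * y)) := this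
      _ = y ^ c + -c * (x ^ (c - 1) * y) := by field_simp
  nlinarith [hxc]

/-- Nonlinear discrete Gronwall lemma with Bernoulli-type nonlinearity (Lemma 2.3). -/
theorem nonlinear_discrete_gronwall
    (S b k : ℕ → ℝ) (p : ℝ) (hp : 1 < p)
    (hSpos : ∀ ℓ ≥ 1, 0 < S ℓ)
    (hSmono : ∀ ℓ ≥ 1, S ℓ ≤ S (ℓ + 1))
    (hb : ∀ ℓ ≥ 1, 0 ≤ b ℓ)
    (hk : ∀ ℓ ≥ 1, 0 ≤ k ℓ)
    (a : ℕ → ℝ)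
    (ha : ∀ ℓ, a ℓ = (∏ s ∈ Finset.Icc 1 (ℓ - 1), (1 + b s))⁻¹)
    (hrec : ∀ ℓ ≥ 1, S (ℓ + 1) - S ℓ ≤ b ℓ * S ℓ + k ℓ * S ℓ ^ p)
    (hposcond : ∀ ℓ ≥ 2,
      0 < S 1 ^ (1 - p) + (1 - p) * ∑ s ∈ Finset.Icc 1 (ℓ - 1), k s * a (s + 1) ^ (1 - p)) :
    ∀ ℓ ≥ 2,
      S ℓ ≤ (a ℓ)⁻¹ *
        (S 1 ^ (1 - p) + (1 - p) * ∑ s ∈ Finset.Icc 1 (ℓ - 1), k s * a (s + 1) ^ (1 - p))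
          ^ (1 / (1 - p)) := by
  set c := 1 - p with hcdef
  have hc : c < 0 := by rw [hcdef]; linarith
  have hprodpos : ∀ ℓ : ℕ, 0 < ∏ s ∈ Finset.Icc 1 (ℓ - 1), (1 + b s) := by
    intro ℓ
    apply Finset.prod_pos
    intro s hs
    have := hb s (Finset.mem_Icc.mp hs).1
    linarith
  have hapos : ∀ ℓ, 0 < a ℓ := fun ℓ => by rw [ha]; exact inv_pos.mpr (hprodpos ℓ)
  have ha1 : a 1 = 1 := by simp [ha]
  have harec : ∀ ℓ ≥ 1, a ℓ = a (ℓ + 1) * (1 + b ℓ) := by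
    intro ℓ hℓ
    have hbℓ : (0:ℝ) < 1 + b ℓ := by have := hb ℓ hℓ; linarith
    rw [ha, ha]
    have h1 : ℓ + 1 - 1 = (ℓ - 1) + 1 := by omega
    have h2 : ℓ - 1 + 1 = ℓ := by omega
    rw [h1, Finset.prod_Icc_succ_top (by omega : 1 ≤ ℓ - 1 + 1), h2, mul_inv,
      mul_assoc, inv_mul_cancel₀ hbℓ.ne', mul_one]
  have hamono : ∀ ℓ ≥ 1, a (ℓ + 1) ≤ a ℓ := by
    intro ℓ hℓ
    rw [harec ℓ hℓ]
    exact le_mul_of_one_le_right (hapos _).le (by have := hb ℓ hℓ; linarith)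
  have hstep : ∀ ℓ ≥ 1, (a ℓ * S ℓ) ^ c + c * (k ℓ * a (ℓ + 1) ^ c)
      ≤ (a (ℓ + 1) * S (ℓ + 1)) ^ c := by
    intro ℓ hℓ
    have hSℓ := hSpos ℓ hℓ
    have hy : 0 < a ℓ * S ℓ := mul_pos (hapos ℓ) hSℓ
    have hz : 0 < a (ℓ + 1) * S (ℓ + 1) := mul_pos (hapos _) (hSpos _ (by omega))
    have htan := rpow_tangent_of_neg hc hy hz
    have h1 : S (ℓ + 1) ≤ (1 + b ℓ) * S ℓ + k ℓ * S ℓ ^ p := by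
      have := hrec ℓ hℓ; nlinarith
    have h2 : a (ℓ + 1) * S (ℓ + 1) ≤ a ℓ * S ℓ + k ℓ * a (ℓ + 1) * S ℓ ^ p := by
      have h2' := mul_le_mul_of_nonneg_left h1 (hapos (ℓ + 1)).le
      rw [harec ℓ hℓ]
      nlinarith [h2']
    have hSppos : (0:ℝ) ≤ S ℓ ^ p := (Real.rpow_pos_of_pos hSℓ p).le
    have h4 : a (ℓ + 1) ≤ a (ℓ + 1) ^ c * a ℓ ^ p := by
      have h5 : a (ℓ + 1) ^ p ≤ a ℓ ^ p :=
        Real.rpow_le_rpow (hapos _).le (hamono ℓ hℓ) (by linarith)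
      have h6 : a (ℓ + 1) = a (ℓ + 1) ^ c * a (ℓ + 1) ^ p := by
        rw [← Real.rpow_add (hapos _), (by rw [hcdef]; ring : c + p = 1), Real.rpow_one]
      calc a (ℓ + 1) = a (ℓ + 1) ^ c * a (ℓ + 1) ^ p := h6
        _ ≤ a (ℓ + 1) ^ c * a ℓ ^ p :=
          mul_le_mul_of_nonneg_left h5 (Real.rpow_pos_of_pos (hapos _) c).le
    have h3 : k ℓ * a (ℓ + 1) * S ℓ ^ p ≤ k ℓ * a (ℓ + 1) ^ c * (a ℓ * S ℓ) ^ p := by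
      rw [Real.mul_rpow (hapos ℓ).le hSℓ.le]
      have h7 := mul_le_mul_of_nonneg_right
        (mul_le_mul_of_nonneg_left h4 (hk ℓ hℓ)) hSppos
      calc k ℓ * a (ℓ + 1) * S ℓ ^ p ≤ k ℓ * (a (ℓ + 1) ^ c * a ℓ ^ p) * S ℓ ^ p := h7
        _ = k ℓ * a (ℓ + 1) ^ c * (a ℓ ^ p * S ℓ ^ p) := by ring
    have hzy : a (ℓ + 1) * S (ℓ + 1) - a ℓ * S ℓ
        ≤ k ℓ * a (ℓ + 1) ^ c * (a ℓ * S ℓ) ^ p := by linarith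
    have hpow : (a ℓ * S ℓ) ^ (c - 1) * (a ℓ * S ℓ) ^ p = 1 := by
      rw [← Real.rpow_add hy, (by rw [hcdef]; ring : c - 1 + p = 0), Real.rpow_zero]
    have hynn := Real.rpow_pos_of_pos hy (c - 1)
    have h6 : c * (k ℓ * a (ℓ + 1) ^ c)
        ≤ c * (a ℓ * S ℓ) ^ (c - 1) * (a (ℓ + 1) * S (ℓ + 1) - a ℓ * S ℓ) := by
      have h7 := mul_le_mul_of_nonpos_left
        (mul_le_mul_of_nonneg_left hzy hynn.le) hc.le
      have e : (a ℓ * S ℓ) ^ (c - 1) * (k ℓ * a (ℓ + 1) ^ c * (a ℓ * S ℓ) ^ p)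
          = k ℓ * a (ℓ + 1) ^ c * ((a ℓ * S ℓ) ^ (c - 1) * (a ℓ * S ℓ) ^ p) := by ring
      rw [e, hpow, mul_one] at h7
      calc c * (k ℓ * a (ℓ + 1) ^ c)
          ≤ c * ((a ℓ * S ℓ) ^ (c - 1) * (a (ℓ + 1) * S (ℓ + 1) - a ℓ * S ℓ)) := h7
        _ = c * (a ℓ * S ℓ) ^ (c - 1) * (a (ℓ + 1) * S (ℓ + 1) - a ℓ * S ℓ) := by ring
    linarith
  have main : ∀ ℓ ≥ 1,
      S 1 ^ c + c * ∑ s ∈ Finset.Icc 1 (ℓ - 1), k s * a (s + 1) ^ c ≤ (a ℓ * S ℓ) ^ c := by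
    intro ℓ hℓ
    induction ℓ, hℓ using Nat.le_induction with
    | base => simp [ha1]
    | succ n hn ih =>
      have h1 : n + 1 - 1 = (n - 1) + 1 := by omega
      have h2 : n - 1 + 1 = n := by omega
      have hsum : ∑ s ∈ Finset.Icc 1 (n + 1 - 1), k s * a (s + 1) ^ c
          = (∑ s ∈ Finset.Icc 1 (n - 1), k s * a (s + 1) ^ c) + k n * a (n + 1) ^ c := by
        rw [h1, Finset.sum_Icc_succ_top (by omega : 1 ≤ n - 1 + 1), h2]
      rw [hsum, mul_add]
      have := hstep n hn
      linarith
  intro ℓ hℓ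
  have h1 : ℓ ≥ 1 := by omega
  have hE := hposcond ℓ hℓ
  have hmain := main ℓ h1
  have hy : 0 < a ℓ * S ℓ := mul_pos (hapos ℓ) (hSpos ℓ h1)
  have h2 : S 1 ^ c + c * ∑ s ∈ Finset.Icc 1 (ℓ - 1), k s * a (s + 1) ^ c
      ≤ (a ℓ * S ℓ) ^ c := hmain
  have h3 := Real.rpow_le_rpow_of_nonpos hE h2
    (by rw [hcdef]; exact div_nonpos_of_nonneg_of_nonpos zero_le_one (by linarith) : 1 / c ≤ 0)
  have h4 : ((a ℓ * S ℓ) ^ c) ^ (1 / c) = a ℓ * S ℓ := by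
    rw [← Real.rpow_mul hy.le, mul_one_div, div_self hc.ne, Real.rpow_one]
  rw [h4] at h3
  calc S ℓ = (a ℓ)⁻¹ * (a ℓ * S ℓ) := by rw [inv_mul_cancel_left₀ (hapos ℓ).ne']
    _ ≤ (a ℓ)⁻¹ * (S 1 ^ c + c * ∑ s ∈ Finset.Icc 1 (ℓ - 1), k s * a (s + 1) ^ c) ^ (1 / c) :=
      mul_le_mul_of_nonneg_left h3 (inv_nonneg.mpr (hapos ℓ).le)
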